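/- For every d ≥ 2 there exists an oriented spanning tree T_d of the set Perm(d) of permutations of {1,…,d}, rooted at the identity, such that every edge goes from a permutation α to α∘(i j) for some transposition (i j), and such that every path from the root id to a node α, read as a sequence of transpositions, is an alternated factorization of α: its first transposition contains d, and any three consecutive indices appearing in consecutive transpositions are pairwise distinct. -/

import Mathlib

/-- `u` is (the tail of) an alternated factorization of α: with chain c = (d-1) :: u,
α is the product of the swaps of consecutive chain elements, consecutive chain elements
are distinct, and chain elements at distance 2 are distinct. -/
def AltFact (d : ℕ) (hd : 0 < d) (α : Equiv.Perm (Fin d)) (u : List (Fin d)) : Prop :=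
  α = (((((⟨d - 1, by omega⟩ : Fin d) :: u).zip u).map
        fun p => Equiv.swap p.1 p.2).prod) ∧
  List.Chain' (· ≠ ·) ((⟨d - 1, by omega⟩ : Fin d) :: u) ∧
  ∀ (i : ℕ) (h : i + 2 < ((⟨d - 1, by omega⟩ : Fin d) :: u).length),
    ((⟨d - 1, by omega⟩ : Fin d) :: u).get ⟨i, by omega⟩ ≠
    ((⟨d - 1, by omega⟩ : Fin d) :: u).get ⟨i + 2, h⟩

namespace S14

open Equiv List

/-- the distinguished point d-1 -/
def em (d : ℕ) (hd : 0 < d) : Fin d := ⟨d - 1, by omega⟩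

/-- the parent of a node in the spanning tree -/
noncomputable def par (d : ℕ) (hd : 0 < d) (α : Equiv.Perm (Fin d)) : Equiv.Perm (Fin d) :=
  if h : α = 1 then 1
  else if α (em d hd) ≠ em d hd then
    α * Equiv.swap (α⁻¹ (em d hd)) (α⁻¹ (α⁻¹ (em d hd)))
  else
    α * Equiv.swap (α⁻¹ (α.support.min' (by
      rw [Finset.nonempty_iff_ne_empty, Ne, Equiv.Perm.support_eq_empty_iff]; exact h)))
      (em d hd)

/-- the letter appended on the edge from the parent -/
noncomputable def ltr (d : ℕ) (hd : 0 < d) (α : Equiv.Perm (Fin d)) : Fin d :=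
  if α (em d hd) ≠ em d hd then α⁻¹ (em d hd) else em d hd

/-- termination measure -/
noncomputable def meas (d : ℕ) (hd : 0 < d) (α : Equiv.Perm (Fin d)) : ℕ :=
  2 * α.support.card + (if α (em d hd) = em d hd then 3 else 0)

theorem meas_par_lt (d : ℕ) (hd : 0 < d) (α : Equiv.Perm (Fin d)) (h : α ≠ 1) :
    meas d hd (par d hd α) < meas d hd α := by
  set m := em d hd with hmdef
  by_cases hm : α m = m
  · -- case B : m is fixed
    have hne : α.support.Nonempty := by
      rw [Finset.nonempty_iff_ne_empty, Ne, Equiv.Perm.support_eq_empty_iff]; exact h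
    set s := α.support.min' hne with hsdef
    have hs : s ∈ α.support := Finset.min'_mem _ _
    have hss : α s ≠ s := Equiv.Perm.mem_support.mp hs
    set a := α⁻¹ s with ha
    have haa : α a = s := α.apply_symm_apply s
    have has : a ≠ s := by
      intro e
      apply hss
      have := haa
      rwa [e] at this
    have hmsupp : m ∉ α.support := by rw [Equiv.Perm.mem_support]; push_neg; exact hm
    have hsm : s ≠ m := fun e => hmsupp (e ▸ hs)
    have ham : a ≠ m := by
      intro e
      exact hsm (by rw [← haa, e, hm])
    have hasupp : a ∈ α.support := by
      rw [Equiv.Perm.mem_support, haa]; exact fun e => has e.symm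
    have hpar : par d hd α = α * Equiv.swap a m := by
      rw [par, dif_neg h, if_neg (by push_neg; exact hm)]
    set β := α * Equiv.swap a m with hβ
    have hsub : β.support ⊆ insert m α.support := by
      intro x hx
      by_contra hc
      simp only [Finset.mem_insert, not_or] at hc
      obtain ⟨hxm, hxs⟩ := hc
      have hxa : x ≠ a := fun e => hxs (e ▸ hasupp)
      have : β x = x := by
        rw [hβ, Equiv.Perm.mul_apply, Equiv.swap_apply_of_ne_of_ne hxa hxm]
        exact not_not.mp (Equiv.Perm.mem_support.not.mp hxs)
      exact (Equiv.Perm.mem_support.mp hx) this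
    have hcard : β.support.card ≤ α.support.card + 1 :=
      le_trans (Finset.card_le_card hsub) (Finset.card_insert_le _ _)
    have hβm : β m = s := by
      rw [hβ, Equiv.Perm.mul_apply, Equiv.swap_apply_right, haa]
    have hβmne : ¬ β m = m := by rw [hβm]; exact hsm
    rw [hpar, meas, meas, if_neg hβmne, if_pos hm]
    omega
  · -- case A : m is moved
    set a := α⁻¹ m with ha
    set b := α⁻¹ a with hb
    have haa : α a = m := α.apply_symm_apply m
    have hab : α b = a := α.apply_symm_apply a
    have ham : a ≠ m := by
      intro e
      apply hm
      have := haa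
      rwa [e] at this
    have hane : a ≠ b := by
      intro e
      apply ham
      have : m = a := by rw [← haa, e, hab]; exact e
      exact this.symm
    have hasupp : a ∈ α.support := Equiv.Perm.mem_support.mpr (by rw [haa]; exact Ne.symm ham)
    have hbsupp : b ∈ α.support := Equiv.Perm.mem_support.mpr (by rw [hab]; exact hane)
    have hpar : par d hd α = α * Equiv.swap a b := by
      rw [par, dif_neg h, if_pos hm]
    set β := α * Equiv.swap a b with hβ
    have hβa : β a = a := by rw [hβ, Equiv.Perm.mul_apply, Equiv.swap_apply_left, hab]
    have hsub : β.support ⊆ α.support := by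
      intro x hx
      by_contra hc
      have hxa : x ≠ a := fun e => hc (e ▸ hasupp)
      have hxb : x ≠ b := fun e => hc (e ▸ hbsupp)
      have : β x = x := by
        rw [hβ, Equiv.Perm.mul_apply, Equiv.swap_apply_of_ne_of_ne hxa hxb]
        exact not_not.mp (Equiv.Perm.mem_support.not.mp hc)
      exact (Equiv.Perm.mem_support.mp hx) this
    have hanot : a ∉ β.support := Equiv.Perm.mem_support.not.mpr (not_not.mpr hβa)
    by_cases hbm : b = m
    · -- subcase p = 1 : b = m
      have hβm : β m = m := by
        rw [hβ, Equiv.Perm.mul_apply, ← hbm, Equiv.swap_apply_right, haa, hbm]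
      have hmnot : m ∉ β.support := Equiv.Perm.mem_support.not.mpr (not_not.mpr hβm)
      have hmsupp : m ∈ α.support := Equiv.Perm.mem_support.mpr hm
      have hcard : β.support.card + 2 ≤ α.support.card := by
        have h1 : insert a (insert m β.support) ⊆ α.support := by
          intro x hx
          simp only [Finset.mem_insert] at hx
          rcases hx with rfl | rfl | hx
          · exact hasupp
          · exact hmsupp
          · exact hsub hx
        have h2 : (insert a (insert m β.support)).card = β.support.card + 2 := by
          rw [Finset.card_insert_of_notMem (by simp [ham, hanot]),
            Finset.card_insert_of_notMem hmnot]
        calc β.support.card + 2 = _ := h2.symm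
          _ ≤ _ := Finset.card_le_card h1
      rw [hpar, meas, meas, if_pos hβm, if_neg hm]
      omega
    · -- subcase p ≥ 2 : b ≠ m
      have hβm : β m = α m := by
        rw [hβ, Equiv.Perm.mul_apply,
          Equiv.swap_apply_of_ne_of_ne (Ne.symm ham) (fun e => hbm e.symm)]
      have hβmne : ¬ β m = m := by rw [hβm]; exact hm
      have hcard : β.support.card < α.support.card :=
        Finset.card_lt_card (Finset.ssubset_iff_of_subset hsub |>.mpr ⟨a, hasupp, hanot⟩)
      rw [hpar, meas, meas, if_neg hβmne, if_neg hm]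
      omega

/-- the spanning-tree factorization -/
noncomputable def ff (d : ℕ) (hd : 0 < d) (α : Equiv.Perm (Fin d)) : List (Fin d) :=
  if h : α = 1 then [] else ff d hd (par d hd α) ++ [ltr d hd α]
termination_by meas d hd α
decreasing_by exact meas_par_lt d hd α h

theorem ff_one (d : ℕ) (hd : 0 < d) : ff d hd 1 = [] := by rw [ff]; simp

theorem ff_ne (d : ℕ) (hd : 0 < d) (α : Equiv.Perm (Fin d)) (h : α ≠ 1) :
    ff d hd α = ff d hd (par d hd α) ++ [ltr d hd α] := by rw [ff]; simp [h]


theorem step_lemmas (d : ℕ) (hd : 0 < d) (α : Equiv.Perm (Fin d)) (h : α ≠ 1) :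
    α = par d hd α * Equiv.swap ((par d hd α)⁻¹ (em d hd)) (ltr d hd α) ∧
    ltr d hd α ≠ (par d hd α)⁻¹ (em d hd) ∧
    (par d hd α ≠ 1 → ltr d hd α ≠ (par d hd (par d hd α))⁻¹ (em d hd)) ∧
    ltr d hd α = α⁻¹ (em d hd) := by
  set m := em d hd with hmdef
  by_cases hm : α m = m
  · -- case B : m is fixed
    have hne : α.support.Nonempty := by
      rw [Finset.nonempty_iff_ne_empty, Ne, Equiv.Perm.support_eq_empty_iff]; exact h
    set s := α.support.min' hne with hsdef
    have hs : s ∈ α.support := Finset.min'_mem _ _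
    have hss : α s ≠ s := Equiv.Perm.mem_support.mp hs
    set a := α⁻¹ s with ha
    have haa : α a = s := α.apply_symm_apply s
    have has : a ≠ s := by
      intro e
      apply hss
      have := haa
      rwa [e] at this
    have hmsupp : m ∉ α.support := by rw [Equiv.Perm.mem_support]; push_neg; exact hm
    have hsm : s ≠ m := fun e => hmsupp (e ▸ hs)
    have ham : a ≠ m := by
      intro e
      exact hsm (by rw [← haa, e, hm])
    have hpar : par d hd α = α * Equiv.swap a m := by
      rw [par, dif_neg h, if_neg (not_not.mpr hm)]
    have hltr : ltr d hd α = m := by rw [ltr, if_neg (not_not.mpr hm)]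
    set β := α * Equiv.swap a m with hβ
    have hβa : β a = m := by rw [hβ, Equiv.Perm.mul_apply, Equiv.swap_apply_left, hm]
    have hβm : β m = s := by rw [hβ, Equiv.Perm.mul_apply, Equiv.swap_apply_right, haa]
    have hβinv : β⁻¹ m = a := Equiv.Perm.inv_eq_iff_eq.mpr hβa.symm
    have hβ1 : β ≠ 1 := by
      intro e
      rw [e] at hβm
      exact hsm (by simpa using hβm.symm)
    refine ⟨?_, ?_, ?_, ?_⟩
    · rw [hpar, hltr, hβinv]
      rw [hβ, mul_assoc, Equiv.swap_mul_self, mul_one]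
    · rw [hpar, hltr, hβinv]; exact Ne.symm ham
    · intro _
      rw [hpar, hltr]
      have hβmm : ¬ β m = m := by rw [hβm]; exact hsm
      have hparβ : par d hd β = β * Equiv.swap (β⁻¹ m) (β⁻¹ (β⁻¹ m)) := by
        rw [par, dif_neg hβ1, if_pos hβmm]
      have hkey : (par d hd β) (β⁻¹ (β⁻¹ m)) = m := by
        rw [hparβ, Equiv.Perm.mul_apply, Equiv.swap_apply_right, Equiv.Perm.inv_def, Equiv.apply_symm_apply]
      have hinv2 : (par d hd β)⁻¹ m = β⁻¹ (β⁻¹ m) := Equiv.Perm.inv_eq_iff_eq.mpr hkey.symm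
      rw [hinv2, hβinv]
      intro e
      apply has
      have : β m = β (β⁻¹ a) := by rw [← e]
      rw [hβm, Equiv.Perm.inv_def, Equiv.apply_symm_apply] at this
      exact this.symm
    · rw [hltr]
      exact (Equiv.Perm.inv_eq_iff_eq.mpr hm.symm).symm
  · -- case A : m is moved
    set a := α⁻¹ m with ha
    set b := α⁻¹ a with hb
    have haa : α a = m := α.apply_symm_apply m
    have hab : α b = a := α.apply_symm_apply a
    have ham : a ≠ m := by
      intro e
      apply hm
      have := haa
      rwa [e] at this
    have hane : a ≠ b := by
      intro e
      apply ham
      have : m = a := by rw [← haa, e, hab]; exact e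
      exact this.symm
    have hpar : par d hd α = α * Equiv.swap a b := by
      rw [par, dif_neg h, if_pos hm]
    have hltr : ltr d hd α = a := by rw [ltr, if_pos hm]
    set β := α * Equiv.swap a b with hβ
    have hβa : β a = a := by rw [hβ, Equiv.Perm.mul_apply, Equiv.swap_apply_left, hab]
    have hβb : β b = m := by rw [hβ, Equiv.Perm.mul_apply, Equiv.swap_apply_right, haa]
    have hβinv : β⁻¹ m = b := Equiv.Perm.inv_eq_iff_eq.mpr hβb.symm
    refine ⟨?_, ?_, ?_, ?_⟩
    · rw [hpar, hltr, hβinv]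
      rw [hβ, mul_assoc, Equiv.swap_comm b a, Equiv.swap_mul_self, mul_one]
    · rw [hpar, hltr, hβinv]; exact hane
    · intro hβ1
      rw [hpar] at hβ1
      rw [hpar, hltr]
      by_cases hβm : β m = m
      · -- parent has m fixed
        have hβne : β.support.Nonempty := by
          rw [Finset.nonempty_iff_ne_empty, Ne, Equiv.Perm.support_eq_empty_iff]; exact hβ1
        have hparβ : par d hd β = β * Equiv.swap (β⁻¹ (β.support.min' hβne)) m := by
          rw [par, dif_neg hβ1, if_neg (not_not.mpr hβm)]
        set s' := β.support.min' hβne with hs'def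
        have hkey : (par d hd β) (β⁻¹ s') = m := by
          rw [hparβ, Equiv.Perm.mul_apply, Equiv.swap_apply_left, hβm]
        have hinv2 : (par d hd β)⁻¹ m = β⁻¹ s' := Equiv.Perm.inv_eq_iff_eq.mpr hkey.symm
        rw [hinv2]
        intro e
        have hs' : s' ∈ β.support := Finset.min'_mem _ _
        have : β a = s' := by rw [e, Equiv.Perm.inv_def, Equiv.apply_symm_apply]
        rw [hβa] at this
        rw [← this] at hs'
        exact (Equiv.Perm.mem_support.mp hs') hβa
      · -- parent still moves m
        have hparβ : par d hd β = β * Equiv.swap (β⁻¹ m) (β⁻¹ (β⁻¹ m)) := by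
          rw [par, dif_neg hβ1, if_pos hβm]
        have hkey : (par d hd β) (β⁻¹ (β⁻¹ m)) = m := by
          rw [hparβ, Equiv.Perm.mul_apply, Equiv.swap_apply_right, Equiv.Perm.inv_def, Equiv.apply_symm_apply]
        have hinv2 : (par d hd β)⁻¹ m = β⁻¹ (β⁻¹ m) := Equiv.Perm.inv_eq_iff_eq.mpr hkey.symm
        rw [hinv2, hβinv]
        intro e
        apply hane
        have : β a = β (β⁻¹ b) := by rw [← e]
        rw [hβa, Equiv.Perm.inv_def, Equiv.apply_symm_apply] at this
        exact this
    · rw [hltr]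

def chainProd {d : ℕ} (c : List (Fin d)) : Equiv.Perm (Fin d) :=
  ((c.zip c.tail).map fun p => Equiv.swap p.1 p.2).prod

theorem chainProd_cons {d : ℕ} (x y : Fin d) (l : List (Fin d)) :
    chainProd (x :: y :: l) = Equiv.swap x y * chainProd (y :: l) := by
  simp [chainProd]

theorem chainProd_append {d : ℕ} (c : List (Fin d)) (hc : c ≠ []) (v : Fin d) :
    chainProd (c ++ [v]) = chainProd c * Equiv.swap (c.getLast hc) v := by
  induction c with
  | nil => exact absurd rfl hc
  | cons x t ih =>
    cases t with
    | nil => simp [chainProd]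
    | cons y t2 =>
      have e1 : (x :: y :: t2) ++ [v] = x :: ((y :: t2) ++ [v]) := rfl
      rw [e1]
      rw [show x :: ((y :: t2) ++ [v]) = x :: y :: (t2 ++ [v]) from rfl]
      rw [chainProd_cons, show (y :: (t2 ++ [v])) = ((y :: t2) ++ [v]) from rfl,
        ih (List.cons_ne_nil _ _), chainProd_cons, mul_assoc,
        List.getLast_cons (List.cons_ne_nil _ _)]

theorem altFact_iff (d : ℕ) (hd : 0 < d) (α : Equiv.Perm (Fin d)) (u : List (Fin d)) :
    AltFact d hd α u ↔
      (α = chainProd (em d hd :: u) ∧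
       List.Chain' (· ≠ ·) (em d hd :: u) ∧
       ∀ (i : ℕ) (h : i + 2 < (em d hd :: u).length),
         (em d hd :: u).get ⟨i, by omega⟩ ≠ (em d hd :: u).get ⟨i + 2, h⟩) := Iff.rfl

theorem dist_append {X : Type*} (c : List X) (v w : X)
    (hdist : ∀ (i : ℕ) (h : i + 2 < c.length), c.get ⟨i, by omega⟩ ≠ c.get ⟨i + 2, h⟩)
    (hsl : ∀ (i : ℕ) (hi : i + 2 = c.length), c.get ⟨i, by omega⟩ = w)
    (hvw : 2 ≤ c.length → v ≠ w) :
    ∀ (i : ℕ) (h : i + 2 < (c ++ [v]).length),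
      (c ++ [v]).get ⟨i, by omega⟩ ≠ (c ++ [v]).get ⟨i + 2, h⟩ := by
  intro i h
  simp only [List.get_eq_getElem]
  have hlen : (c ++ [v]).length = c.length + 1 := by simp
  by_cases hc : i + 2 < c.length
  · rw [List.getElem_append_left (by omega), List.getElem_append_left hc]
    have := hdist i hc
    simpa using this
  · have he : i + 2 = c.length := by omega
    rw [List.getElem_concat_length he, List.getElem_append_left (by omega)]
    have := hsl i he
    simp only [List.get_eq_getElem] at this
    rw [this]
    exact fun e => (hvw (by omega)) e.symm

theorem sl_append {X : Type*} (c : List X) (v w : X) (hc : c ≠ [])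
    (hlast : c.getLast hc = w) :
    ∀ (i : ℕ) (hi : i + 2 = (c ++ [v]).length),
      (c ++ [v]).get ⟨i, by omega⟩ = w := by
  intro i hi
  simp only [List.get_eq_getElem]
  have hlen : (c ++ [v]).length = c.length + 1 := by simp
  have hlp : 0 < c.length := List.length_pos_iff.mpr hc
  have hi' : i = c.length - 1 := by omega
  rw [List.getElem_append_left (by omega)]
  rw [← hlast, List.getLast_eq_getElem]
  congr 1

theorem inv_main (d : ℕ) (hd : 0 < d) :
    ∀ (n : ℕ) (α : Equiv.Perm (Fin d)), meas d hd α ≤ n →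
    AltFact d hd α (ff d hd α) ∧
    (em d hd :: ff d hd α).getLast (List.cons_ne_nil _ _) = α⁻¹ (em d hd) ∧
    ∀ (i : ℕ) (hi : i + 2 = (em d hd :: ff d hd α).length),
      (em d hd :: ff d hd α).get ⟨i, by omega⟩ = (par d hd α)⁻¹ (em d hd) := by
  intro n
  induction n with
  | zero =>
    intro α hα
    exfalso
    have h1 : α.support.card = 0 := by
      have := hα
      rw [meas] at this
      omega
    have h2 : α = 1 := by
      rw [← Equiv.Perm.support_eq_empty_iff]
      exact Finset.card_eq_zero.mp h1
    subst h2
    rw [meas] at hα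
    simp at hα
  | succ n ih =>
    intro α hα
    by_cases h1 : α = 1
    · subst h1
      refine ⟨?_, ?_, ?_⟩
      · rw [ff_one, altFact_iff]
        refine ⟨by simp [chainProd], List.isChain_singleton _, ?_⟩
        intro i h
        simp only [List.length_cons, List.length_nil] at h
        omega
      · have h4 : ∀ (u : List (Fin d)) (e : u = []) (hh : em d hd :: u ≠ []),
            (em d hd :: u).getLast hh = (1 : Equiv.Perm (Fin d))⁻¹ (em d hd) := by
          intro u e hh
          subst e
          simp
        exact h4 _ (ff_one d hd) _
      · intro i hi
        exfalso
        rw [ff_one] at hi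
        simp only [List.length_cons, List.length_nil] at hi
        omega
    · -- inductive step
      set β := par d hd α with hβdef
      set v := ltr d hd α with hvdef
      have hff : ff d hd α = ff d hd β ++ [v] := ff_ne d hd α h1
      have hmeaslt := meas_par_lt d hd α h1
      rw [← hβdef] at hmeaslt
      obtain ⟨ihalt, ihlast, ihsl⟩ := ih β (by omega)
      rw [altFact_iff] at ihalt
      obtain ⟨ihprod, ihchain, ihdist⟩ := ihalt
      obtain ⟨l1, l2, l3, l4⟩ := step_lemmas d hd α h1
      have hca : em d hd :: ff d hd α = (em d hd :: ff d hd β) ++ [v] := by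
        rw [hff]
        rfl
      have hβ1iff : β ≠ 1 → 2 ≤ (em d hd :: ff d hd β).length := by
        intro hβ1
        rw [ff_ne d hd β hβ1]
        simp
      have hlen1 : 2 ≤ (em d hd :: ff d hd β).length → β ≠ 1 := by
        intro hl e
        rw [e, ff_one] at hl
        simp at hl
      refine ⟨?_, ?_, ?_⟩
      · rw [altFact_iff]
        refine ⟨?_, ?_, ?_⟩
        · rw [hca, chainProd_append _ (List.cons_ne_nil _ _) v, ihlast, ← ihprod]
          exact l1
        · rw [hca]
          refine List.IsChain.append ihchain (List.isChain_singleton v) ?_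
          intro x hx y hy
          rw [List.getLast?_eq_getLast (List.cons_ne_nil _ _)] at hx
          simp only [Option.mem_some_iff] at hx
          simp only [List.head?_cons, Option.mem_some_iff] at hy
          subst hx
          subst hy
          rw [ihlast]
          exact fun e => l2 e.symm
        · intro i h
          have key := dist_append _ v ((par d hd β)⁻¹ (em d hd)) ihdist ihsl ?_ i
            (by rw [← hca]; exact h)
          · simp only [List.get_eq_getElem] at key ⊢
            simp only [hca]
            exact key
          intro hl
          exact l3 (hlen1 hl)
      · have h4 : ∀ (L : List (Fin d)) (hL : L ≠ [])
            (e : L = (em d hd :: ff d hd β) ++ [v]), L.getLast hL = α⁻¹ (em d hd) := by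
          intro L hL e
          subst e
          rw [List.getLast_append]
          exact l4
        exact h4 _ _ hca
      · intro i hi
        have key := sl_append _ v _ (List.cons_ne_nil _ _) ihlast i (by rw [← hca]; exact hi)
        simp only [List.get_eq_getElem] at key ⊢
        simp only [hca]
        exact key

end S14


/-- there is a spanning tree of Perm(d) rooted at the identity: a map f
assigning to each permutation α an alternated factorization of α, with f(id) empty and
each non-identity node obtained from its parent by appending one transposition. -/
theorem stmt14 (d : ℕ) (hd : 2 ≤ d) :
    ∃ f : Equiv.Perm (Fin d) → List (Fin d),
      f 1 = [] ∧
      (∀ α, AltFact d (by omega) α (f α)) ∧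
      (∀ α, α ≠ 1 → ∃ (β : Equiv.Perm (Fin d)) (v : Fin d), f α = f β ++ [v]) := by
  have hd0 : 0 < d := by omega
  refine ⟨S14.ff d hd0, S14.ff_one d hd0, ?_, ?_⟩
  · intro α
    exact (S14.inv_main d hd0 (S14.meas d hd0 α) α le_rfl).1
  · intro α hα
    exact ⟨S14.par d hd0 α, S14.ltr d hd0 α, S14.ff_ne d hd0 α hα⟩
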